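/- For the mixed stable Lévy intensity with α = 1, ρ_mSt(w; 1, τ) ∼ (1/(1−τ)) w^{−2}/log²(1/w) as w → 0. -/

import Mathlib

open Real Filter Set intervalIntegral

/-- Lévy intensity of the mixed stable CRM. -/
noncomputable def rhoMSt (α τ w : ℝ) : ℝ :=
  (1 / (α - τ)) * ∫ s in τ..α, (s / Real.Gamma (1 - s)) * w ^ (-1 - s)

noncomputable def hfun (s : ℝ) : ℝ := s / Real.Gamma (2 - s)

lemma hfun_contAt {s : ℝ} (hs : s < 2) : ContinuousAt hfun s := by
  have h2 : (0:ℝ) < 2 - s := by linarith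
  have hΓ : ContinuousAt Real.Gamma (2 - s) :=
    (Real.differentiableAt_Gamma (fun m => by
      have : -(m:ℝ) ≤ 0 := neg_nonpos.mpr (Nat.cast_nonneg m)
      intro hc; linarith [hc ▸ h2])).continuousAt
  exact continuousAt_id.div (hΓ.comp ((continuous_const.sub continuous_id).continuousAt))
    (Real.Gamma_pos_of_pos h2).ne'

lemma hfun_one : hfun 1 = 1 := by
  simp [hfun, show (2:ℝ) - 1 = 1 by norm_num, Real.Gamma_one]

lemma ratio_eq (τ : ℝ) (h0 : 0 ≤ τ) (h1 : τ < 1) {w : ℝ} (hw : w ∈ Ioo (0:ℝ) 1) :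
    rhoMSt 1 τ w / ((1 / (1 - τ)) * w ^ (-2:ℝ) / (Real.log (1/w))^2)
      = ∫ u in Ioi (0:ℝ), (Ioc (0:ℝ) ((1-τ) * (-Real.log w))).indicator
          (fun u => u * hfun (1 - u / (-Real.log w)) * Real.exp (-u)) u := by
  obtain ⟨hw0, hw1⟩ := hw
  set L : ℝ := -Real.log w with hLdef
  have hL : 0 < L := by
    have := Real.log_neg hw0 hw1; simp only [hLdef]; linarith
  set M : ℝ := (1-τ) * L with hMdef
  have hM : 0 < M := mul_pos (by linarith) hL
  have hτ : (1:ℝ) - τ ≠ 0 := by linarith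
  have hw2 : (0:ℝ) < w ^ (-2:ℝ) := Real.rpow_pos_of_pos hw0 _
  have hlog : Real.log (1/w) = L := by rw [one_div, Real.log_inv]
  -- RHS as interval integral
  have hRHS : (∫ u in Ioi (0:ℝ), (Ioc (0:ℝ) M).indicator
        (fun u => u * hfun (1 - u / L) * Real.exp (-u)) u)
      = ∫ u in (0:ℝ)..M, u * hfun (1 - u / L) * Real.exp (-u) := by
    rw [MeasureTheory.integral_indicator measurableSet_Ioc,
      MeasureTheory.Measure.restrict_restrict measurableSet_Ioc,
      Set.inter_eq_left.mpr Set.Ioc_subset_Ioi_self,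
      intervalIntegral.integral_of_le hM.le]
  -- step 1 : pull out w^(-2)
  have E1 : (∫ s in τ..(1:ℝ), (s / Real.Gamma (1 - s)) * w ^ (-1 - s))
      = w ^ (-2:ℝ) * ∫ s in τ..(1:ℝ), (s / Real.Gamma (1 - s)) * Real.exp (-((1-s)*L)) := by
    rw [← intervalIntegral.integral_const_mul]
    apply intervalIntegral.integral_congr
    intro s _
    have h : w ^ (-1 - s) = w ^ (-2:ℝ) * Real.exp (-((1-s)*L)) := by
      rw [Real.rpow_def_of_pos hw0, Real.rpow_def_of_pos hw0, ← Real.exp_add]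
      congr 1; simp only [hLdef]; ring
    dsimp only
    rw [h]; ring
  -- step 2 : substitute s = 1 - t
  have E2 : (∫ s in τ..(1:ℝ), (s / Real.Gamma (1 - s)) * Real.exp (-((1-s)*L)))
      = ∫ t in (0:ℝ)..(1-τ), ((1-t) / Real.Gamma t) * Real.exp (-(t*L)) := by
    have := intervalIntegral.integral_comp_sub_left (a := 0) (b := 1 - τ)
      (fun s => (s / Real.Gamma (1 - s)) * Real.exp (-((1-s)*L))) 1
    simp only [sub_zero, sub_sub_cancel] at this
    exact this.symm
  -- step 3 : scale t = u / L
  have E3 : (∫ t in (0:ℝ)..(1-τ), ((1-t) / Real.Gamma t) * Real.exp (-(t*L)))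
      = L⁻¹ * ∫ u in (0:ℝ)..M,
          ((1-u/L) / Real.Gamma (u/L)) * Real.exp (-((u/L)*L)) := by
    have := intervalIntegral.integral_comp_div (a := 0) (b := M)
      (fun t => ((1-t) / Real.Gamma t) * Real.exp (-(t*L))) hL.ne'
    rw [zero_div, hMdef, mul_div_assoc, div_self hL.ne', mul_one] at this
    rw [← hMdef] at this
    rw [this, smul_eq_mul, ← mul_assoc, inv_mul_cancel₀ hL.ne', one_mul]
  -- step 4 : rewrite integrand via hfun
  have E4 : (L * ∫ u in (0:ℝ)..M,
        ((1-u/L) / Real.Gamma (u/L)) * Real.exp (-((u/L)*L)))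
      = ∫ u in (0:ℝ)..M, u * hfun (1 - u / L) * Real.exp (-u) := by
    rw [← intervalIntegral.integral_const_mul]
    apply intervalIntegral.integral_congr
    intro u hu
    rw [Set.uIcc_of_le hM.le] at hu
    dsimp only
    rcases eq_or_lt_of_le hu.1 with h | h
    · simp [← h, Real.Gamma_zero]
    · have hx : 0 < u / L := div_pos h hL
      have hΓx : Real.Gamma (u / L) ≠ 0 := (Real.Gamma_pos_of_pos hx).ne'
      have e3 : u / L * L = u := div_mul_cancel₀ u hL.ne'
      have e2 : 2 - (1 - u / L) = u / L + 1 := by ring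
      simp only [hfun, e2, e3, Real.Gamma_add_one hx.ne']
      field_simp
  -- assemble
  rw [hRHS, ← E4, rhoMSt, E1, E2, E3, hlog]
  field_simp

theorem stmt_11 (τ : ℝ) (h0 : 0 ≤ τ) (h1 : τ < 1) :
    Filter.Tendsto
      (fun w : ℝ =>
        rhoMSt 1 τ w / ((1 / (1 - τ)) * w ^ (-2 : ℝ) / (Real.log (1 / w)) ^ 2))
      (nhdsWithin 0 (Set.Ioi 0)) (nhds 1) := by
  have hτ : (0:ℝ) < 1 - τ := by linarith
  -- bound for hfun on [0,1]
  obtain ⟨C, hC⟩ : ∃ C, ∀ s ∈ Icc (0:ℝ) 1, ‖hfun s‖ ≤ C :=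
    isCompact_Icc.exists_bound_of_continuousOn
      (fun s hs => (hfun_contAt (lt_of_le_of_lt hs.2 one_lt_two)).continuousWithinAt)
  have hC0 : 0 ≤ C := le_trans (norm_nonneg _) (hC 0 ⟨le_refl _, zero_le_one⟩)
  set F : ℝ → ℝ → ℝ := fun w u =>
    (Ioc (0:ℝ) ((1-τ) * (-Real.log w))).indicator
      (fun u => u * hfun (1 - u / (-Real.log w)) * Real.exp (-u)) u with hF
  have hLt : Tendsto (fun w : ℝ => -Real.log w) (nhdsWithin 0 (Ioi 0)) atTop :=
    tendsto_neg_atBot_atTop.comp Real.tendsto_log_nhdsGT_zero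
  have hmemIoo : Ioo (0:ℝ) 1 ∈ nhdsWithin (0:ℝ) (Ioi 0) :=
    Ioo_mem_nhdsGT_of_mem (left_mem_Ico.mpr one_pos)
  -- limit integral value
  have hGamma2 : Real.Gamma 2 = 1 := by
    rw [show (2:ℝ) = 1 + 1 by norm_num, Real.Gamma_add_one one_ne_zero, Real.Gamma_one]; ring
  have hlim_int : (∫ u in Ioi (0:ℝ), u * Real.exp (-u)) = 1 := by
    have h := Real.Gamma_eq_integral (by norm_num : (0:ℝ) < 2)
    rw [hGamma2, show ((2:ℝ)-1) = 1 by norm_num] at h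
    simp_rw [Real.rpow_one, mul_comm] at h
    exact h.symm
  have hbound_int : MeasureTheory.Integrable (fun u => C * (u * Real.exp (-u)))
      (MeasureTheory.volume.restrict (Ioi (0:ℝ))) := by
    have h := Real.GammaIntegral_convergent (by norm_num : (0:ℝ) < 2)
    rw [show ((2:ℝ)-1) = 1 by norm_num] at h
    exact (show MeasureTheory.Integrable (fun u => u * Real.exp (-u))
        (MeasureTheory.volume.restrict (Ioi (0:ℝ))) from (by simpa [Real.rpow_one, mul_comm] using h :
      MeasureTheory.IntegrableOn (fun u => u * Real.exp (-u)) (Ioi (0:ℝ)) MeasureTheory.volume)).const_mul C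
  have key : Tendsto (fun w => ∫ u in Ioi (0:ℝ), F w u) (nhdsWithin 0 (Ioi 0)) (nhds 1) := by
    rw [← hlim_int]
    apply MeasureTheory.tendsto_integral_filter_of_dominated_convergence
      (fun u => C * (u * Real.exp (-u)))
    · -- measurability
      filter_upwards [hmemIoo] with w hw
      have hL : 0 < -Real.log w := by
        have := Real.log_neg hw.1 hw.2; linarith
      have hcont : ContinuousOn (fun u : ℝ => u * hfun (1 - u / (-Real.log w)) * Real.exp (-u))
          (Ioi (0:ℝ)) := by
        intro u hu
        have hlt : 1 - u / (-Real.log w) < 2 := by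
          have : 0 < u / (-Real.log w) := div_pos hu hL
          linarith
        have hc1 : ContinuousAt (fun u : ℝ => 1 - u / (-Real.log w)) u := by fun_prop
        have hc2 := ContinuousAt.comp (x := u) (f := fun u : ℝ => 1 - u / (-Real.log w)) (hfun_contAt hlt) hc1
        have hc3 : ContinuousAt (fun u : ℝ => Real.exp (-u)) u := by fun_prop
        exact ContinuousAt.continuousWithinAt
          (by exact (continuousAt_id.mul hc2).mul hc3)
      exact ((hcont.aestronglyMeasurable measurableSet_Ioi).indicator measurableSet_Ioc)
    · -- bound
      filter_upwards [hmemIoo] with w hw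
      have hL : 0 < -Real.log w := by
        have := Real.log_neg hw.1 hw.2; linarith
      rw [MeasureTheory.ae_restrict_iff' measurableSet_Ioi]
      refine MeasureTheory.ae_of_all _ (fun u hu => ?_)
      by_cases hmem : u ∈ Ioc (0:ℝ) ((1-τ) * (-Real.log w))
      · rw [hF]
        simp only [Set.indicator_of_mem hmem]
        have hs0 : (0:ℝ) ≤ 1 - u / (-Real.log w) := by
          have : u / (-Real.log w) ≤ 1 - τ := (div_le_iff₀ hL).mpr (by linarith [hmem.2])
          linarith
        have hs1 : 1 - u / (-Real.log w) ≤ 1 := by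
          have : 0 ≤ u / (-Real.log w) := le_of_lt (div_pos hmem.1 hL)
          linarith
        have hCb := hC _ ⟨hs0, hs1⟩
        rw [Real.norm_eq_abs, abs_mul, abs_mul, abs_of_pos hmem.1, abs_of_pos (Real.exp_pos _)]
        calc u * |hfun (1 - u / (-Real.log w))| * Real.exp (-u)
            ≤ u * C * Real.exp (-u) := by
              apply mul_le_mul_of_nonneg_right _ (Real.exp_pos _).le
              exact mul_le_mul_of_nonneg_left (by simpa using hCb) hmem.1.le
          _ = C * (u * Real.exp (-u)) := by ring
      · rw [hF]
        simp only [Set.indicator_of_notMem hmem, norm_zero]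
        have : 0 < u * Real.exp (-u) := mul_pos hu (Real.exp_pos _)
        nlinarith
    · exact hbound_int
    · -- pointwise limit
      rw [MeasureTheory.ae_restrict_iff' measurableSet_Ioi]
      refine MeasureTheory.ae_of_all _ (fun u hu => ?_)
      have hdiv : Tendsto (fun w : ℝ => u / (-Real.log w)) (nhdsWithin 0 (Ioi 0)) (nhds 0) :=
        Tendsto.div_atTop tendsto_const_nhds hLt
      have h1 : Tendsto (fun w : ℝ => 1 - u / (-Real.log w)) (nhdsWithin 0 (Ioi 0)) (nhds 1) := by
        have h := (tendsto_const_nhds :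
          Tendsto (fun _ : ℝ => (1:ℝ)) (nhdsWithin (0:ℝ) (Ioi 0)) (nhds 1)).sub hdiv
        simpa using h
      have h2 : Tendsto (fun w : ℝ => u * hfun (1 - u / (-Real.log w)) * Real.exp (-u))
          (nhdsWithin 0 (Ioi 0)) (nhds (u * Real.exp (-u))) := by
        have h := (tendsto_const_nhds :
          Tendsto (fun _ : ℝ => u) (nhdsWithin (0:ℝ) (Ioi 0)) (nhds u)).mul
          (((hfun_contAt one_lt_two).tendsto.comp h1))
        have h2 := h.mul (tendsto_const_nhds :
          Tendsto (fun _ : ℝ => Real.exp (-u)) (nhdsWithin (0:ℝ) (Ioi 0)) (nhds (Real.exp (-u))))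
        simpa [hfun_one, Function.comp] using h2
      apply h2.congr'
      have hev : ∀ᶠ w : ℝ in nhdsWithin 0 (Ioi 0), u / (1-τ) < -Real.log w :=
        hLt.eventually_gt_atTop _
      filter_upwards [hev] with w hw
      have hmem : u ∈ Ioc (0:ℝ) ((1-τ) * (-Real.log w)) :=
        ⟨hu, by rw [← div_le_iff₀' hτ] ; exact hw.le⟩
      rw [hF]
      simp only [Set.indicator_of_mem hmem]
  apply key.congr'
  filter_upwards [hmemIoo] with w hw
  exact (ratio_eq τ h0 h1 hw).symm
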